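/- Let Γ = (V,E) be a finite connected G-locally arc-transitive graph for some G ≤ Aut(Γ), let {α,β} ∈ E, and let N be a normal subgroup of G. Suppose gcd(|N_α|, |Γ(α)|) = 1 and gcd(|N_β|, |Γ(β)|) = 1. Then N is semiregular on V. -/

import Mathlib

def IsAutGroup {V : Type*} (Γ : SimpleGraph V) (G : Subgroup (Equiv.Perm V)) : Prop :=
  ∀ g ∈ G, ∀ u v : V, Γ.Adj u v → Γ.Adj (g u) (g v)

def stabOf {V : Type*} (G : Subgroup (Equiv.Perm V)) (α : V) : Subgroup (Equiv.Perm V) :=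
  G ⊓ MulAction.stabilizer (Equiv.Perm V) α

def TransOn {V : Type*} (H : Subgroup (Equiv.Perm V)) (S : Set V) : Prop :=
  ∀ x ∈ S, ∀ y ∈ S, ∃ g ∈ H, g x = y

def NormalIn {W : Type*} [Group W] (N H : Subgroup W) : Prop :=
  N ≤ H ∧ ∀ h ∈ H, ∀ x ∈ N, h * x * h⁻¹ ∈ N

section Aux

variable {V : Type*}

lemma mem_stabOf {G : Subgroup (Equiv.Perm V)} {α : V} {g : Equiv.Perm V} :
    g ∈ stabOf G α ↔ g ∈ G ∧ g α = α := by
  simp [stabOf, Subgroup.mem_inf, MulAction.mem_stabilizer_iff, Equiv.Perm.smul_def]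

variable {Γ : SimpleGraph V} {G : Subgroup (Equiv.Perm V)}

lemma adj_iff (hG : IsAutGroup Γ G) {g : Equiv.Perm V} (hg : g ∈ G) {u v : V} :
    Γ.Adj (g u) (g v) ↔ Γ.Adj u v := by
  constructor
  · intro h
    have := hG g⁻¹ (inv_mem hg) _ _ h
    simpa using this
  · exact hG g hg u v

/-- neighbours transport along an automorphism -/
lemma neighborSet_image (hG : IsAutGroup Γ G) {g : Equiv.Perm V} (hg : g ∈ G) (x : V) :
    Γ.neighborSet (g x) = g '' Γ.neighborSet x := by
  ext e
  simp only [SimpleGraph.mem_neighborSet, Set.mem_image]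
  constructor
  · intro h
    refine ⟨g⁻¹ e, ?_, by simp⟩
    have : Γ.Adj (g x) (g (g⁻¹ e)) := by simpa using h
    exact (adj_iff hG hg).mp this
  · rintro ⟨d, hd, rfl⟩
    exact (adj_iff hG hg).mpr hd

lemma ncard_neighborSet_eq (hG : IsAutGroup Γ G) {g : Equiv.Perm V} (hg : g ∈ G) (x : V) :
    (Γ.neighborSet (g x)).ncard = (Γ.neighborSet x).ncard := by
  rw [neighborSet_image hG hg x, Set.ncard_image_of_injective _ g.injective]

lemma card_stabOf_eq {N : Subgroup (Equiv.Perm V)} (hN : NormalIn N G)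
    {g : Equiv.Perm V} (hg : g ∈ G) (x : V) :
    Nat.card (stabOf N (g x)) = Nat.card (stabOf N x) := by
  refine Nat.card_congr ?_
  refine ⟨fun n => ⟨g⁻¹ * n * g, ?_⟩, fun n => ⟨g * n * g⁻¹, ?_⟩, ?_, ?_⟩
  · obtain ⟨hn1, hn2⟩ := mem_stabOf.mp n.2
    refine mem_stabOf.mpr ⟨by simpa using hN.2 g⁻¹ (inv_mem hg) _ hn1, ?_⟩
    simp only [Equiv.Perm.mul_apply]
    rw [hn2]
    simp
  · obtain ⟨hn1, hn2⟩ := mem_stabOf.mp n.2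
    refine mem_stabOf.mpr ⟨hN.2 g hg _ hn1, ?_⟩
    simp [Equiv.Perm.mul_apply, hn2]
  · intro n; ext : 1; simp [mul_assoc]
  · intro n; ext : 1; simp [← mul_assoc]

/-- The key local argument: if `gcd(|N_γ|, |Γ(γ)|) = 1` then `N_γ` fixes `Γ(γ)` pointwise. -/
lemma fix_step [Finite V] {N : Subgroup (Equiv.Perm V)} (hG : IsAutGroup Γ G)
    (hN : NormalIn N G) (γ : V)
    (htrans : TransOn (stabOf G γ) (Γ.neighborSet γ))
    (hgcd : Nat.gcd (Nat.card ↥(stabOf N γ)) ((Γ.neighborSet γ).ncard) = 1)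
    {n : Equiv.Perm V} (hn : n ∈ stabOf N γ) {δ : V} (hδ : Γ.Adj γ δ) : n δ = δ := by
  classical
  have : Fintype V := Fintype.ofFinite V
  set H := stabOf N γ with hH
  haveI : Fintype H := Fintype.ofFinite H
  set S : Finset V := (Γ.neighborSet γ).toFinset with hS
  -- orbit of a point under H, as a Finset
  set orb : V → Finset V := fun d => Finset.univ.image (fun h : H => (h : Equiv.Perm V) d)
    with horb
  have mem_orb : ∀ d : V, ∀ h : H, (h : Equiv.Perm V) d ∈ orb d := by
    intro d h; exact Finset.mem_image.mpr ⟨h, Finset.mem_univ _, rfl⟩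
  have self_mem_orb : ∀ d : V, d ∈ orb d := fun d => by
    simpa using mem_orb d 1
  have orb_eq : ∀ d e : V, e ∈ orb d → orb e = orb d := by
    intro d e he
    obtain ⟨h, -, rfl⟩ := Finset.mem_image.mp he
    ext x
    simp only [horb, Finset.mem_image]
    constructor
    · rintro ⟨k, -, rfl⟩
      exact ⟨k * h, Finset.mem_univ _, by simp [Equiv.Perm.mul_apply]⟩
    · rintro ⟨k, -, rfl⟩
      exact ⟨k * h⁻¹, Finset.mem_univ _, by
        simp only [Subgroup.coe_mul, Equiv.Perm.mul_apply]
        congr 1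
        simp [← Equiv.Perm.mul_apply]⟩
  have orb_subset : ∀ d, d ∈ S → orb d ⊆ S := by
    intro d hd x hx
    obtain ⟨h, -, rfl⟩ := Finset.mem_image.mp hx
    obtain ⟨hh1, hh2⟩ := mem_stabOf.mp h.2
    have hd' : Γ.Adj γ d := by simpa [hS, Set.mem_toFinset] using hd
    have : Γ.Adj ((h : Equiv.Perm V) γ) ((h : Equiv.Perm V) d) :=
      hG _ (hN.1 hh1) _ _ hd'
    rw [hh2] at this
    simpa [hS, Set.mem_toFinset] using this
  -- the orbit cardinality divides |H|
  have orb_card_dvd : ∀ d : V, (orb d).card ∣ Nat.card H := by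
    intro d
    have hset : (MulAction.orbit H d) = ↑(orb d) := by
      ext x
      simp [MulAction.mem_orbit_iff, horb, Equiv.Perm.smul_def, eq_comm,
        Subgroup.smul_def]
    have h1 : Nat.card (MulAction.orbit H d) = (orb d).card := by
      rw [hset, Nat.card_coe_set_eq, Set.ncard_coe_finset]
    rw [← h1]
    rw [Nat.card_congr (MulAction.orbitEquivQuotientStabilizer H d)]
    exact Subgroup.card_quotient_dvd_card _
  -- all orbits of points of S have equal cardinality
  have orb_card_eq : ∀ d ∈ S, ∀ e ∈ S, (orb d).card = (orb e).card := by
    intro d hd e he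
    have hd' : d ∈ Γ.neighborSet γ := by simpa [hS, Set.mem_toFinset] using hd
    have he' : e ∈ Γ.neighborSet γ := by simpa [hS, Set.mem_toFinset] using he
    obtain ⟨g, hg, hge⟩ := htrans d hd' e he'
    obtain ⟨hg1, hg2⟩ := mem_stabOf.mp hg
    have himg : orb e = Finset.image g (orb d) := by
      have hg2' : g⁻¹ γ = γ := by nth_rewrite 1 [← hg2]; simp
      have hge' : g⁻¹ e = d := by rw [← hge]; simp
      ext x
      simp only [horb, Finset.mem_image]
      constructor
      · rintro ⟨k, -, rfl⟩
        obtain ⟨hk1, hk2⟩ := mem_stabOf.mp k.2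
        refine ⟨(g⁻¹ * k * g) d, ⟨⟨g⁻¹ * (k : Equiv.Perm V) * g, mem_stabOf.mpr
          ⟨by simpa using hN.2 g⁻¹ (inv_mem hg1) _ hk1, ?_⟩⟩, Finset.mem_univ _, rfl⟩, ?_⟩
        · show g⁻¹ ((k : Equiv.Perm V) (g γ)) = γ
          rw [hg2, hk2, hg2']
        · simp only [Equiv.Perm.mul_apply, Equiv.Perm.inv_def, Equiv.apply_symm_apply, hge]
      · rintro ⟨y, ⟨k, -, rfl⟩, rfl⟩
        obtain ⟨hk1, hk2⟩ := mem_stabOf.mp k.2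
        refine ⟨⟨g * (k : Equiv.Perm V) * g⁻¹, mem_stabOf.mpr
          ⟨hN.2 g hg1 _ hk1, ?_⟩⟩, Finset.mem_univ _, ?_⟩
        · show g ((k : Equiv.Perm V) (g⁻¹ γ)) = γ
          rw [hg2', hk2, hg2]
        · simp only [Equiv.Perm.mul_apply, hge']
    rw [himg, Finset.card_image_of_injective _ g.injective]
  -- orbits partition S, so the common orbit size divides |S|
  set t := (orb δ).card with ht
  have hδS : δ ∈ S := by simpa [hS, Set.mem_toFinset] using hδ
  have hpart : S.card = (S.image orb).card * t := by
    rw [Finset.card_eq_sum_card_fiberwise (f := orb) (t := S.image orb)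
      (fun x hx => Finset.mem_image_of_mem orb hx)]
    rw [Finset.sum_congr rfl (g := fun _ => t), Finset.sum_const, smul_eq_mul]
    intro O hO
    obtain ⟨d, hd, rfl⟩ := Finset.mem_image.mp hO
    have hfib : S.filter (fun x => orb x = orb d) = orb d := by
      ext x
      simp only [Finset.mem_filter]
      constructor
      · rintro ⟨hxS, hx⟩
        rw [← hx]; exact self_mem_orb x
      · intro hx
        exact ⟨orb_subset d hd hx, orb_eq d x hx⟩
    rw [hfib]
    exact orb_card_eq d hd δ hδS
  have hdvd1 : t ∣ Nat.card H := orb_card_dvd δ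
  have hdvd2 : t ∣ (Γ.neighborSet γ).ncard := by
    have : (Γ.neighborSet γ).ncard = S.card := by
      simp [hS, Set.ncard_eq_toFinset_card']
    rw [this, hpart]
    exact dvd_mul_left t _
  have ht1 : t = 1 := Nat.eq_one_of_dvd_one (hgcd ▸ Nat.dvd_gcd hdvd1 hdvd2)
  obtain ⟨a, ha⟩ := Finset.card_eq_one.mp ht1
  have hda : δ = a := by
    have := self_mem_orb δ; rw [ha] at this; simpa using this
  have hna : n δ ∈ orb δ := mem_orb δ ⟨n, hn⟩
  rw [ha] at hna
  simpa [← hda] using hna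

end Aux

section Main

variable {V : Type*} {Γ : SimpleGraph V} {G : Subgroup (Equiv.Perm V)}

lemma Qstep (hlocal : ∀ γ : V, TransOn (stabOf G γ) (Γ.neighborSet γ))
    {α β u x : V}
    (hQ : ∀ δ, Γ.Adj u δ → ∃ g ∈ G, (g α = u ∧ g β = δ) ∨ (g α = δ ∧ g β = u))
    (hux : Γ.Adj u x) :
    ∀ ε, Γ.Adj x ε → ∃ g ∈ G, (g α = x ∧ g β = ε) ∨ (g α = ε ∧ g β = x) := by
  intro ε hε
  obtain ⟨h, hh, hhu⟩ := hlocal x u ((Γ.mem_neighborSet x u).mpr hux.symm) ε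
    ((Γ.mem_neighborSet x ε).mpr hε)
  obtain ⟨hh1, hh2⟩ := mem_stabOf.mp hh
  obtain ⟨g, hgG, hg⟩ := hQ x hux
  refine ⟨h * g, mul_mem hh1 hgG, ?_⟩
  rcases hg with ⟨h1, h2⟩ | ⟨h1, h2⟩
  · right
    constructor <;> simp only [Equiv.Perm.mul_apply, h1, h2, hhu, hh2]
  · left
    constructor <;> simp only [Equiv.Perm.mul_apply, h1, h2, hhu, hh2]

lemma edge_orbit (hlocal : ∀ γ : V, TransOn (stabOf G γ) (Γ.neighborSet γ))
    (hconn : Γ.Connected) {α β : V} (hadj : Γ.Adj α β) :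
    ∀ γ δ, Γ.Adj γ δ → ∃ g ∈ G, (g α = γ ∧ g β = δ) ∨ (g α = δ ∧ g β = γ) := by
  have base : ∀ δ, Γ.Adj α δ → ∃ g ∈ G, (g α = α ∧ g β = δ) ∨ (g α = δ ∧ g β = α) := by
    intro δ hδ
    obtain ⟨g, hg, hgβ⟩ := hlocal α β ((Γ.mem_neighborSet α β).mpr hadj) δ
      ((Γ.mem_neighborSet α δ).mpr hδ)
    obtain ⟨hg1, hg2⟩ := mem_stabOf.mp hg
    exact ⟨g, hg1, Or.inl ⟨hg2, hgβ⟩⟩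
  have walkP : ∀ (u γ : V) (w : Γ.Walk u γ),
      (∀ δ, Γ.Adj u δ → ∃ g ∈ G, (g α = u ∧ g β = δ) ∨ (g α = δ ∧ g β = u)) →
      (∀ δ, Γ.Adj γ δ → ∃ g ∈ G, (g α = γ ∧ g β = δ) ∨ (g α = δ ∧ g β = γ)) := by
    intro u γ w
    induction w with
    | nil => exact fun h => h
    | cons hadj' _ ih => exact fun h => ih (Qstep hlocal h hadj')
  intro γ δ h
  obtain ⟨w⟩ := hconn.preconnected α γ
  exact walkP α γ w base δ h

end Main

/-- **Lemma 2.4 (tech-5).** Let `Γ` be a finite connected `G`-locally arc-transitive graph,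
`{α,β}` an edge and `N ⊴ G`. If `gcd(|N_α|, |Γ(α)|) = 1 = gcd(|N_β|, |Γ(β)|)`, then `N` is
semiregular on `V`. -/
theorem stmt_5 {V : Type*} [Finite V] (Γ : SimpleGraph V)
    (G N : Subgroup (Equiv.Perm V)) (α β : V)
    (hconn : Γ.Connected) (hG : IsAutGroup Γ G)
    (hlocal : ∀ γ : V, TransOn (stabOf G γ) (Γ.neighborSet γ))
    (hadj : Γ.Adj α β) (hN : NormalIn N G)
    (hα : Nat.gcd (Nat.card ↥(stabOf N α)) ((Γ.neighborSet α).ncard) = 1)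
    (hβ : Nat.gcd (Nat.card ↥(stabOf N β)) ((Γ.neighborSet β).ncard) = 1) :
    ∀ γ : V, stabOf N γ = ⊥ := by
  classical
  have hgcd_all : ∀ γ δ : V, Γ.Adj γ δ →
      Nat.gcd (Nat.card ↥(stabOf N γ)) ((Γ.neighborSet γ).ncard) = 1 := by
    intro γ δ h
    obtain ⟨g, hgG, hg⟩ := edge_orbit hlocal hconn hadj γ δ h
    rcases hg with ⟨h1, -⟩ | ⟨-, h2⟩
    · rw [← h1, card_stabOf_eq hN hgG, ncard_neighborSet_eq hG hgG]; exact hα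
    · rw [← h2, card_stabOf_eq hN hgG, ncard_neighborSet_eq hG hgG]; exact hβ
  have stab_le : ∀ γ δ : V, Γ.Adj γ δ → stabOf N γ ≤ stabOf N δ := by
    intro γ δ h n hn
    obtain ⟨hn1, -⟩ := mem_stabOf.mp hn
    exact mem_stabOf.mpr ⟨hn1, fix_step hG hN γ (hlocal γ) (hgcd_all γ δ h) hn h⟩
  have stab_eq : ∀ γ δ : V, Γ.Adj γ δ → stabOf N γ = stabOf N δ :=
    fun γ δ h => le_antisymm (stab_le γ δ h) (stab_le δ γ h.symm)
  have walk_eq : ∀ (u γ : V), Γ.Walk u γ → stabOf N u = stabOf N γ := by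
    intro u γ w
    induction w with
    | nil => rfl
    | cons h _ ih => exact (stab_eq _ _ h).trans ih
  have hall : ∀ x : V, stabOf N x = stabOf N α := by
    intro x
    obtain ⟨w⟩ := hconn.preconnected x α
    exact walk_eq x α w
  intro γ
  rw [eq_bot_iff]
  intro n hn
  have hfix : ∀ x : V, n x = x := by
    intro x
    have hx : n ∈ stabOf N x := by
      rw [hall x, ← hall γ]; exact hn
    exact (mem_stabOf.mp hx).2
  exact Subgroup.mem_bot.mpr (Equiv.ext hfix)
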